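/- Let A be a real m × n matrix of full row rank with m < n, let b ∈ ℝᵐ, and suppose SOL(A,b) is nonempty. Then there exists a constant â > 0 and a point x̂ ∈ SOL(A,b) such that x̂ minimizes P_â over SOL(A,b) and x̂ also minimizes the ℓ₀-norm over SOL(A,b); that is, P_â(x̂) ≤ P_â(x) for all x ∈ SOL(A,b) and ‖x̂‖₀ ≤ ‖x‖₀ for all x ∈ SOL(A,b). -/

import Mathlib

open Matrix Filter Topology

noncomputable def rho (a t : ℝ) : ℝ := a * |t| / (a * |t| + 1)

noncomputable def Pa {n : ℕ} (a : ℝ) (x : Fin n → ℝ) : ℝ := ∑ i, rho a (x i)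

open scoped Classical in
noncomputable def l0 {n : ℕ} (x : Fin n → ℝ) : ℕ :=
  (Finset.univ.filter fun i => x i ≠ 0).card

def SOL {m n : ℕ} (A : Matrix (Fin m) (Fin n) ℝ) (b : Fin m → ℝ) : Set (Fin n → ℝ) :=
  {x | A.mulVec x = b ∧ 0 ≤ x}

noncomputable def sqN {n : ℕ} (v : Fin n → ℝ) : ℝ := ∑ i, (v i) ^ 2

def projPos {n : ℕ} (v : Fin n → ℝ) : Fin n → ℝ := fun i => max 0 (v i)

noncomputable def C1 {m n : ℕ} (A : Matrix (Fin m) (Fin n) ℝ) (b : Fin m → ℝ)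
    (lam a : ℝ) (x : Fin n → ℝ) : ℝ :=
  sqN (A.mulVec x - b) + lam * Pa a x

noncomputable def C2 {m n : ℕ} (A : Matrix (Fin m) (Fin n) ℝ) (b : Fin m → ℝ)
    (lam a mu : ℝ) (x z : Fin n → ℝ) : ℝ :=
  mu * (C1 A b lam a x - sqN (A.mulVec x - A.mulVec z)) + sqN (x - z)

noncomputable def Bmu {m n : ℕ} (A : Matrix (Fin m) (Fin n) ℝ) (b : Fin m → ℝ)
    (mu : ℝ) (z : Fin n → ℝ) : Fin n → ℝ :=
  z + mu • (Aᵀ.mulVec (b - A.mulVec z))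



lemma denom_pos {a t : ℝ} (ha : 0 < a) : 0 < a * |t| + 1 := by positivity

lemma rho_nonneg {a : ℝ} (ha : 0 < a) (t : ℝ) : 0 ≤ rho a t := by
  unfold rho; positivity

lemma rho_le_one {a : ℝ} (ha : 0 < a) (t : ℝ) : rho a t ≤ 1 := by
  unfold rho
  rw [div_le_one (denom_pos ha)]; linarith

lemma rho_of_nonneg {a t : ℝ} (ht : 0 ≤ t) : rho a t = a * t / (a * t + 1) := by
  unfold rho; rw [abs_of_nonneg ht]

lemma rho_mono {a s t : ℝ} (ha : 0 < a) (hs : 0 ≤ s) (hst : s ≤ t) :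
    rho a s ≤ rho a t := by
  rw [rho_of_nonneg hs, rho_of_nonneg (hs.trans hst)]
  have h1 : (0:ℝ) < a * s + 1 := by nlinarith
  have h2 : (0:ℝ) < a * t + 1 := by nlinarith
  rw [div_le_div_iff₀ h1 h2]
  nlinarith

lemma rho_concave {a u v l : ℝ} (ha : 0 < a) (hu : 0 ≤ u) (hv : 0 ≤ v)
    (hl : 0 ≤ l) (hl1 : l ≤ 1) :
    l * rho a u + (1 - l) * rho a v ≤ rho a (l * u + (1 - l) * v) := by
  have hc : 0 ≤ l * u + (1 - l) * v := by nlinarith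
  rw [rho_of_nonneg hu, rho_of_nonneg hv, rho_of_nonneg hc]
  set p := a * u with hp
  set q := a * v with hq
  have hp0 : 0 ≤ p := by positivity
  have hq0 : 0 ≤ q := by positivity
  have h1 : (0:ℝ) < p + 1 := by linarith
  have h2 : (0:ℝ) < q + 1 := by linarith
  have hr : a * (l * u + (1 - l) * v) = l * p + (1 - l) * q := by ring
  rw [hr]
  have h3 : (0:ℝ) < l * p + (1 - l) * q + 1 := by nlinarith
  rw [← mul_div_assoc, ← mul_div_assoc, div_add_div _ _ h1.ne' h2.ne', div_le_div_iff₀ (by positivity) h3]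
  nlinarith [sq_nonneg (p - q), mul_nonneg hl (sub_nonneg.2 hl1), mul_nonneg (mul_nonneg hl (sub_nonneg.2 hl1)) (sq_nonneg (p - q))]

def IsBasic {m n : ℕ} (A : Matrix (Fin m) (Fin n) ℝ) (x : Fin n → ℝ) : Prop :=
  ∀ d : Fin n → ℝ, A.mulVec d = 0 → (∀ i, x i = 0 → d i = 0) → d = 0

lemma basic_finite {m n : ℕ} (A : Matrix (Fin m) (Fin n) ℝ) (b : Fin m → ℝ) :
    {x | x ∈ SOL A b ∧ IsBasic A x}.Finite := by
  apply Set.Finite.of_finite_image (f := fun x => {i | x i ≠ 0}) (Set.toFinite _)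
  rintro x ⟨hx, hbx⟩ y ⟨hy, hby⟩ hsupp
  simp only at hsupp
  have hd : A.mulVec (x - y) = 0 := by
    rw [Matrix.mulVec_sub, hx.1, hy.1, sub_self]
  have hz : ∀ i, x i = 0 → (x - y) i = 0 := by
    intro i hi
    have : i ∉ {i | x i ≠ 0} := by simp [hi]
    rw [hsupp] at this
    simp only [Set.mem_setOf_eq, not_not] at this
    simp [hi, this]
  have := hbx (x - y) hd hz
  exact sub_eq_zero.1 this

open scoped Classical in
lemma l0_lt {n : ℕ} {x y : Fin n → ℝ} (hsub : ∀ i, y i ≠ 0 → x i ≠ 0)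
    {i0 : Fin n} (hx0 : x i0 ≠ 0) (hy0 : y i0 = 0) : l0 y < l0 x := by
  unfold l0
  apply Finset.card_lt_card
  constructor
  · intro i hi
    simp only [Finset.mem_filter, Finset.mem_univ, true_and] at *
    exact hsub i hi
  · intro h
    have := h (by simp [hx0] : i0 ∈ Finset.univ.filter fun i => x i ≠ 0)
    simp [hy0] at this

lemma rho_zero (a : ℝ) : rho a 0 = 0 := by simp [rho]

open scoped Classical in
lemma Pa_eq_sum_support {n : ℕ} (a : ℝ) (x : Fin n → ℝ) :
    Pa a x = ∑ i ∈ Finset.univ.filter (fun i => x i ≠ 0), rho a (x i) := by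
  rw [Pa, Finset.sum_filter_of_ne]
  intro i _ h
  intro hxi
  rw [hxi, rho_zero] at h
  exact h rfl

lemma Pa_le_l0 {n : ℕ} {a : ℝ} (ha : 0 < a) (x : Fin n → ℝ) :
    Pa a x ≤ (l0 x : ℝ) := by
  classical
  rw [Pa_eq_sum_support, l0]
  calc ∑ i ∈ Finset.univ.filter (fun i => x i ≠ 0), rho a (x i)
      ≤ ∑ i ∈ Finset.univ.filter (fun i => x i ≠ 0), 1 := by
        apply Finset.sum_le_sum
        intro i _
        unfold rho
        rw [div_le_one (by positivity)]; linarith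
    _ = _ := by simp

/-- Given a kernel direction with a negative coordinate (supported on supp x),
move to the boundary: get t > 0 with x + t•e feasible and fewer nonzeros. -/
lemma step_lemma {m n : ℕ} {A : Matrix (Fin m) (Fin n) ℝ} {b : Fin m → ℝ}
    {x e : Fin n → ℝ} (hx : x ∈ SOL A b) (hAe : A.mulVec e = 0)
    (hsupp : ∀ i, x i = 0 → e i = 0) {j : Fin n} (hj : e j < 0) :
    ∃ t : ℝ, 0 < t ∧ (x + t • e) ∈ SOL A b ∧ l0 (x + t • e) < l0 x := by
  classical
  set N : Finset (Fin n) := Finset.univ.filter (fun i => e i < 0) with hN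
  have hNne : N.Nonempty := ⟨j, by simp [hN, hj]⟩
  obtain ⟨i0, hi0N, hi0min⟩ := Finset.exists_min_image N (fun i => x i / (-e i)) hNne
  have hei0 : e i0 < 0 := by simpa [hN] using hi0N
  have hxi0 : 0 < x i0 := by
    rcases lt_or_eq_of_le (hx.2 i0) with h | h
    · exact h
    · exact absurd (hsupp i0 h.symm) (ne_of_lt hei0)
  set t := x i0 / (-e i0) with ht
  have htpos : 0 < t := div_pos hxi0 (by linarith)
  refine ⟨t, htpos, ⟨?_, ?_⟩, ?_⟩
  · rw [Matrix.mulVec_add, Matrix.mulVec_smul, hAe, hx.1]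
    simp
  · intro i
    simp only [Pi.add_apply, Pi.smul_apply, smul_eq_mul, Pi.zero_apply]
    rcases le_or_gt 0 (e i) with h | h
    · have := hx.2 i
      simp only [Pi.zero_apply] at this
      nlinarith
    · have hiN : i ∈ N := by simp [hN, h]
      have := hi0min i hiN
      rw [ht] at *
      have h2 : x i0 / (-e i0) * (-e i) ≤ x i / (-e i) * (-e i) := by
        apply mul_le_mul_of_nonneg_right this (by linarith)
      rw [div_mul_cancel₀] at h2
      · nlinarith
      · linarith
  · apply l0_lt
    · intro i hi
      intro hxi
      have : e i = 0 := hsupp i hxi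
      simp [hxi, this] at hi
    · exact ne_of_gt hxi0
    · simp only [Pi.add_apply, Pi.smul_apply, smul_eq_mul]
      rw [ht]
      have h0 : e i0 ≠ 0 := ne_of_lt hei0
      rw [div_neg, neg_mul, div_mul_cancel₀ _ h0]
      ring

lemma reduction {m n : ℕ} {A : Matrix (Fin m) (Fin n) ℝ} {b : Fin m → ℝ} {a : ℝ}
    (ha : 0 < a) {x : Fin n → ℝ} (hx : x ∈ SOL A b) (hnb : ¬ IsBasic A x) :
    ∃ y ∈ SOL A b, l0 y < l0 x ∧ Pa a y ≤ Pa a x := by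
  unfold IsBasic at hnb
  push_neg at hnb
  obtain ⟨d, hAd, hdsupp, hd0⟩ := hnb
  obtain ⟨e, hAe, hesupp, j, hj⟩ :
      ∃ e : Fin n → ℝ, A.mulVec e = 0 ∧ (∀ i, x i = 0 → e i = 0) ∧ ∃ j, e j < 0 := by
    by_cases h : ∃ j, d j < 0
    · exact ⟨d, hAd, hdsupp, h⟩
    · push_neg at h
      have hne : ∃ j, d j ≠ 0 := by
        by_contra hc; push_neg at hc; exact hd0 (funext hc)
      obtain ⟨j, hjne⟩ := hne
      refine ⟨-d, by rw [Matrix.mulVec_neg, hAd, neg_zero],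
        fun i hi => by simp [hdsupp i hi], j, ?_⟩
      simp only [Pi.neg_apply, neg_neg, neg_lt_zero]
      exact lt_of_le_of_ne (h j) (Ne.symm hjne)
  obtain ⟨t, htpos, hySOL, hyl0⟩ := step_lemma hx hAe hesupp hj
  set y := x + t • e with hy
  by_cases hpos : ∃ i, 0 < e i
  case neg =>
    -- e ≤ 0 : moving decreases coordinates, Pa decreases
    push_neg at hpos
    refine ⟨y, hySOL, hyl0, ?_⟩
    apply Finset.sum_le_sum
    intro i _
    apply rho_mono ha (hySOL.2 i)
    have : e i ≤ 0 := hpos i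
    simp only [hy, Pi.add_apply, Pi.smul_apply, smul_eq_mul]
    nlinarith
  case pos =>
    obtain ⟨i1, hi1⟩ := hpos
    have hj' : (-e) i1 < 0 := by simpa using hi1
    obtain ⟨s, hspos, hzSOL, hzl0⟩ := step_lemma hx
      (by rw [Matrix.mulVec_neg, hAe, neg_zero])
      (fun i hi => by simp [hesupp i hi]) hj'
    set z := x + s • (-e) with hz
    set l := s / (t + s) with hl
    have hts : 0 < t + s := by linarith
    have hl0 : 0 ≤ l := by positivity
    have hl1 : l ≤ 1 := by rw [hl, div_le_one hts]; linarith
    have hcomb : ∀ i, x i = l * y i + (1 - l) * z i := by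
      intro i
      simp only [hy, hz, Pi.add_apply, Pi.smul_apply, smul_eq_mul, Pi.neg_apply, hl]
      field_simp
      ring
    have hPa : l * Pa a y + (1 - l) * Pa a z ≤ Pa a x := by
      unfold Pa
      rw [Finset.mul_sum, Finset.mul_sum, ← Finset.sum_add_distrib]
      apply Finset.sum_le_sum
      intro i _
      rw [hcomb i]
      exact rho_concave ha (hySOL.2 i) (hzSOL.2 i) hl0 hl1
    rcases le_total (Pa a y) (Pa a z) with h | h
    · refine ⟨y, hySOL, hyl0, ?_⟩; nlinarith
    · refine ⟨z, hzSOL, hzl0, ?_⟩; nlinarith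

lemma claim1 {m n : ℕ} {A : Matrix (Fin m) (Fin n) ℝ} {b : Fin m → ℝ} {a : ℝ}
    (ha : 0 < a) :
    ∀ x ∈ SOL A b, ∃ v ∈ SOL A b, IsBasic A v ∧ Pa a v ≤ Pa a x ∧ l0 v ≤ l0 x := by
  have key : ∀ K : ℕ, ∀ x ∈ SOL A b, l0 x ≤ K →
      ∃ v ∈ SOL A b, IsBasic A v ∧ Pa a v ≤ Pa a x ∧ l0 v ≤ l0 x := by
    intro K
    induction K with
    | zero =>
      intro x hx hK
      by_cases hb : IsBasic A x
      · exact ⟨x, hx, hb, le_rfl, le_rfl⟩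
      · obtain ⟨y, hySOL, hyl0, _⟩ := reduction ha hx hb; omega
    | succ K ih =>
      intro x hx hK
      by_cases hb : IsBasic A x
      · exact ⟨x, hx, hb, le_rfl, le_rfl⟩
      · obtain ⟨y, hySOL, hyl0, hyPa⟩ := reduction ha hx hb
        obtain ⟨v, h1, h2, h3, h4⟩ := ih y hySOL (by omega)
        exact ⟨v, h1, h2, h3.trans hyPa, le_trans h4 (by omega)⟩
  intro x hx; exact key (l0 x) x hx le_rfl

open scoped Classical in
lemma Pa_gt {n : ℕ} {v : Fin n → ℝ} (hv : (0:Fin n → ℝ) ≤ v) (k : ℕ) (hk : k < l0 v) :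
    ∀ᶠ a in Filter.atTop, (k:ℝ) < Pa a v := by
  have hne : (Finset.univ.filter fun i => v i ≠ 0).Nonempty := by
    rw [← Finset.card_pos]; unfold l0 at hk; omega
  obtain ⟨i0, hi0, hmin⟩ := Finset.exists_min_image _ (fun i => v i) hne
  have hi0' : v i0 ≠ 0 := by simpa using hi0
  set δ := v i0 with hδdef
  have hδ : 0 < δ := lt_of_le_of_ne (hv i0) (Ne.symm hi0')
  filter_upwards [Filter.eventually_ge_atTop (((k:ℝ)+1)/δ)] with a haa
  have ha : 0 < a := lt_of_lt_of_le (by positivity) haa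
  have haδ : (k:ℝ) + 1 ≤ a * δ := by
    rw [div_le_iff₀ hδ] at haa; linarith
  have hδsum : (l0 v : ℝ) * rho a δ ≤ Pa a v := by
    have h1 : ((Finset.univ.filter fun i => v i ≠ 0).card : ℝ) * rho a δ
        ≤ ∑ i ∈ Finset.univ.filter (fun i => v i ≠ 0), rho a (v i) := by
      rw [← nsmul_eq_mul]
      apply Finset.card_nsmul_le_sum
      intro i hi
      exact rho_mono ha hδ.le (hmin i hi)
    have h2 : ∑ i ∈ Finset.univ.filter (fun i => v i ≠ 0), rho a (v i) ≤ Pa a v := by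
      apply Finset.sum_le_sum_of_subset_of_nonneg (Finset.filter_subset _ _)
      intro i _ _
      exact rho_nonneg ha _
    rw [l0]
    exact le_trans h1 h2
  have hL : (k:ℝ) + 1 ≤ (l0 v : ℝ) := by exact_mod_cast hk
  have hrδ : rho a δ = a * δ / (a * δ + 1) := rho_of_nonneg hδ.le
  have hP1 : (0:ℝ) < a * δ + 1 := by positivity
  have hkey : (k:ℝ) < ((k:ℝ)+1) * (a * δ / (a * δ + 1)) := by
    rw [mul_div_assoc', lt_div_iff₀ hP1]
    nlinarith
  have hr1 : rho a δ ≤ 1 := by rw [hrδ, div_le_one hP1]; linarith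
  have hrnn : 0 ≤ rho a δ := rho_nonneg ha δ
  calc (k:ℝ) < ((k:ℝ)+1) * (a * δ / (a * δ + 1)) := hkey
    _ = ((k:ℝ)+1) * rho a δ := by rw [hrδ]
    _ ≤ (l0 v : ℝ) * rho a δ := by nlinarith
    _ ≤ Pa a v := hδsum

theorem stmt4 {m n : ℕ} (A : Matrix (Fin m) (Fin n) ℝ) (b : Fin m → ℝ)
    (hrank : A.rank = m) (hmn : m < n) (hne : (SOL A b).Nonempty) :
    ∃ ahat : ℝ, 0 < ahat ∧ ∃ xhat ∈ SOL A b,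
      (∀ x ∈ SOL A b, Pa ahat xhat ≤ Pa ahat x) ∧
      (∀ x ∈ SOL A b, l0 xhat ≤ l0 x) := by
  classical
  have hF : {x | x ∈ SOL A b ∧ IsBasic A x}.Finite := basic_finite A b
  set F := hF.toFinset with hFdef
  obtain ⟨x0, hx0⟩ := hne
  obtain ⟨v0, hv0SOL, hv0B, _, _⟩ := claim1 one_pos x0 hx0
  have hFne : F.Nonempty := ⟨v0, hF.mem_toFinset.2 ⟨hv0SOL, hv0B⟩⟩
  obtain ⟨w, hwF, hwmin⟩ := Finset.exists_min_image F l0 hFne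
  set k := l0 w with hkdef
  have hkx : ∀ x ∈ SOL A b, k ≤ l0 x := by
    intro x hx
    obtain ⟨v, h1, h2, _, h4⟩ := claim1 one_pos x hx
    exact le_trans (hwmin v (hF.mem_toFinset.2 ⟨h1, h2⟩)) h4
  have hbig : ∀ᶠ a in Filter.atTop, ∀ v ∈ F, k < l0 v → (k:ℝ) < Pa a v := by
    rw [Filter.eventually_all_finset]
    intro v hvF
    by_cases h : k < l0 v
    · filter_upwards [Pa_gt (hF.mem_toFinset.1 hvF).1.2 k h] with a h2 _
      exact h2
    · filter_upwards with a h3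
      omega
  obtain ⟨a, haprop, ha1⟩ := (hbig.and (Filter.eventually_ge_atTop (1:ℝ))).exists
  have ha : (0:ℝ) < a := lt_of_lt_of_le one_pos ha1
  set F0 := F.filter (fun v => l0 v = k) with hF0def
  have hF0ne : F0.Nonempty := ⟨w, by simp [hF0def, hwF, hkdef]⟩
  obtain ⟨xhat, hxhatF0, hxhatmin⟩ := Finset.exists_min_image F0 (Pa a) hF0ne
  have hxhatF : xhat ∈ F := (Finset.mem_filter.1 hxhatF0).1
  have hxhatk : l0 xhat = k := (Finset.mem_filter.1 hxhatF0).2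
  have hxhatSOL : xhat ∈ SOL A b := (hF.mem_toFinset.1 hxhatF).1
  refine ⟨a, ha, xhat, hxhatSOL, ?_, ?_⟩
  · intro x hx
    obtain ⟨v, h1, h2, h3, h4⟩ := claim1 ha x hx
    have hvF : v ∈ F := hF.mem_toFinset.2 ⟨h1, h2⟩
    by_cases hvk : l0 v = k
    · exact le_trans (hxhatmin v (Finset.mem_filter.2 ⟨hvF, hvk⟩)) h3
    · have hklt : k < l0 v := lt_of_le_of_ne (hwmin v hvF) (Ne.symm hvk)
      have h5 : (k:ℝ) < Pa a v := haprop v hvF hklt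
      have h6 : Pa a xhat ≤ (k:ℝ) := by
        have := Pa_le_l0 ha xhat
        rwa [hxhatk] at this
      linarith
  · intro x hx
    rw [hxhatk]
    exact hkx x hx
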